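/- Let B ⊆ {0,…,b−1} with 0 ∈ B. For every real t > 0, the infinite product γ_B(−t) = ∏_{i=0}^∞ α_B(−b^i t) converges absolutely and equals Σ_{n∈𝓑} e^{−nt}, the sum of e^{−nt} over all B-admissible non-negative integers n. -/

import Mathlib

open Finset

noncomputable section

/-- α_B(t) = Σ_{d∈B} e^{dt}. -/
def alphaB (B : Finset ℕ) (t : ℝ) : ℝ := ∑ d ∈ B, Real.exp (d * t)

/-- A non-negative integer is B-admissible when all its base-b digits lie in B. -/
def BAdm (b : ℕ) (B : Finset ℕ) (n : ℕ) : Prop := ∀ d ∈ Nat.digits b n, d ∈ B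

lemma bAdm_zero (b : ℕ) (B : Finset ℕ) : BAdm b B 0 := by
  intro d hd; simp [Nat.digits_zero] at hd

lemma bAdm_add_mul (b : ℕ) (hb : 2 ≤ b) (B : Finset ℕ) (h0 : 0 ∈ B)
    (d q : ℕ) (hd : d < b) :
    BAdm b B (d + b * q) ↔ (d ∈ B ∧ BAdm b B q) := by
  rcases Nat.eq_zero_or_pos (d + b * q) with h | h
  · have hd0 : d = 0 := by omega
    have hq0 : q = 0 := by
      rcases Nat.eq_zero_or_pos q with h' | h'
      · exact h'
      · exfalso; have : 0 < b * q := Nat.mul_pos (by omega) h'; omega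
    subst hd0; subst hq0
    simp [bAdm_zero, h0]
  · have hdig : Nat.digits b (d + b * q) = d :: Nat.digits b q := by
      rw [Nat.digits_def' (by omega : 1 < b) h]
      congr 1
      · rw [Nat.add_mul_mod_self_left, Nat.mod_eq_of_lt hd]
      · rw [Nat.add_mul_div_left _ _ (by omega : 0 < b), Nat.div_eq_of_lt hd, Nat.zero_add]
    unfold BAdm
    rw [hdig]
    simp [List.forall_mem_cons]

open scoped Classical in
lemma key_prod_eq_sum (b : ℕ) (hb : 2 ≤ b) (B : Finset ℕ) (hB : B ⊆ Finset.range b)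
    (h0 : 0 ∈ B) : ∀ (N : ℕ) (t : ℝ),
    ∏ i ∈ range N, alphaB B (-((b : ℝ) ^ i * t))
      = ∑ n ∈ range (b ^ N), if BAdm b B n then Real.exp (-(n : ℝ) * t) else 0 := by
  intro N
  induction N with
  | zero =>
    intro t
    simp [bAdm_zero]
  | succ N ih =>
    intro t
    rw [Finset.prod_range_succ']
    have h1 : ∀ i : ℕ, alphaB B (-((b : ℝ) ^ (i + 1) * t)) = alphaB B (-((b : ℝ) ^ i * (b * t))) := by
      intro i; congr 1; ring
    have h2 : (∏ i ∈ range N, alphaB B (-((b : ℝ) ^ (i + 1) * t)))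
        = ∑ q ∈ range (b ^ N), if BAdm b B q then Real.exp (-(q : ℝ) * (b * t)) else 0 := by
      rw [Finset.prod_congr rfl fun i _ => h1 i, ih (b * t)]
    rw [h2]
    have h3 : alphaB B (-((b : ℝ) ^ 0 * t))
        = ∑ d ∈ range b, if d ∈ B then Real.exp (-(d : ℝ) * t) else 0 := by
      rw [Finset.sum_ite_mem, Finset.inter_eq_right.mpr hB]
      unfold alphaB
      apply Finset.sum_congr rfl
      intro d _
      congr 1
      ring
    rw [h3]
    rw [Finset.sum_mul_sum]
    -- Now reindex the RHS sum over range (b^(N+1))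
    have hbN : b ^ (N + 1) = b ^ N * b := pow_succ b N
    rw [hbN]
    have hre : ∑ n ∈ range (b ^ N * b), (if BAdm b B n then Real.exp (-(n : ℝ) * t) else 0)
        = ∑ p ∈ range (b ^ N) ×ˢ range b,
            (if BAdm b B (p.2 + b * p.1) then Real.exp (-((p.2 + b * p.1 : ℕ) : ℝ) * t) else 0) := by
      apply Finset.sum_nbij' (i := fun n => (n / b, n % b)) (j := fun p => p.2 + b * p.1)
      · intro n hn
        rw [Finset.mem_range] at hn
        rw [Finset.mem_product, Finset.mem_range, Finset.mem_range]
        constructor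
        · exact Nat.div_lt_of_lt_mul (by rwa [Nat.mul_comm] at hn)
        · exact Nat.mod_lt _ (by omega)
      · intro p hp
        rw [Finset.mem_product, Finset.mem_range, Finset.mem_range] at hp
        rw [Finset.mem_range]
        calc p.2 + b * p.1 < b + b * p.1 := by omega
          _ = b * (p.1 + 1) := by ring
          _ ≤ b * b ^ N := Nat.mul_le_mul_left _ hp.1
          _ = b ^ N * b := Nat.mul_comm _ _
      · intro n _
        exact Nat.mod_add_div n b
      · intro p hp
        rw [Finset.mem_product, Finset.mem_range, Finset.mem_range] at hp
        have h1 : (p.2 + b * p.1) / b = p.1 := by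
          rw [Nat.add_mul_div_left _ _ (by omega : 0 < b), Nat.div_eq_of_lt hp.2, Nat.zero_add]
        have h2 : (p.2 + b * p.1) % b = p.2 := by
          rw [Nat.add_mul_mod_self_left, Nat.mod_eq_of_lt hp.2]
        rw [Prod.ext_iff]
        exact ⟨h1, h2⟩
      · intro n _
        rw [Nat.mod_add_div n b]
    rw [hre, Finset.sum_product]
    apply Finset.sum_congr rfl
    intro q hq
    apply Finset.sum_congr rfl
    intro d hd
    rw [Finset.mem_range] at hd
    rw [bAdm_add_mul b hb B h0 d q hd]
    by_cases h1 : BAdm b B q <;> by_cases h2 : d ∈ B <;>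
      simp [h1, h2, ← Real.exp_add]
    · push_cast
      ring_nf

theorem gammaB_product_eq_sum
    (b : ℕ) (hb : 2 ≤ b) (B : Finset ℕ) (hB : B ⊆ Finset.range b) (h0 : 0 ∈ B)
    (t : ℝ) (ht : 0 < t) :
    Multipliable (fun i : ℕ => alphaB B (-((b : ℝ) ^ i * t)))
    ∧ ∏' i : ℕ, alphaB B (-((b : ℝ) ^ i * t))
        = ∑' n : {n : ℕ // BAdm b B n}, Real.exp (-((n : ℕ) : ℝ) * t) := by
  classical
  set f : ℕ → ℝ := fun i : ℕ => alphaB B (-((b : ℝ) ^ i * t)) with hf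
  have hr0 : 0 ≤ Real.exp (-t) := (Real.exp_pos _).le
  have hr1 : Real.exp (-t) < 1 := Real.exp_lt_one_iff.mpr (by linarith)
  have hbpow : ∀ i : ℕ, 0 < (b : ℝ) ^ i * t := fun i =>
    mul_pos (pow_pos (by positivity) i) ht
  have hone : ∀ i, 1 ≤ f i := by
    intro i
    have := Finset.single_le_sum (f := fun d : ℕ => Real.exp ((d : ℝ) * -((b : ℝ) ^ i * t)))
      (fun d _ => (Real.exp_pos _).le) h0
    simpa [hf, alphaB] using this
  have hpos : ∀ i, 0 < f i := fun i => lt_of_lt_of_le one_pos (hone i)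
  -- bound f i - 1
  have hbound : ∀ i, f i - 1 ≤ (B.card : ℝ) * Real.exp (-t) ^ i := by
    intro i
    have hsplit : f i = Real.exp ((0 : ℕ) * -((b : ℝ) ^ i * t))
        + ∑ d ∈ B.erase 0, Real.exp ((d : ℝ) * -((b : ℝ) ^ i * t)) := by
      rw [hf]
      simp only [alphaB]
      exact (Finset.add_sum_erase B _ h0).symm
    have hterm : ∀ d ∈ B.erase 0,
        Real.exp ((d : ℝ) * -((b : ℝ) ^ i * t)) ≤ Real.exp (-t) ^ i := by
      intro d hd
      have hd1 : 1 ≤ d := Nat.one_le_iff_ne_zero.mpr (Finset.ne_of_mem_erase hd)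
      have h1 : (d : ℝ) * -((b : ℝ) ^ i * t) ≤ -((b : ℝ) ^ i * t) := by
        have : (1 : ℝ) ≤ (d : ℝ) := by exact_mod_cast hd1
        nlinarith [hbpow i]
      have h2 : Real.exp ((d : ℝ) * -((b : ℝ) ^ i * t)) ≤ Real.exp (-((b : ℝ) ^ i * t)) :=
        Real.exp_le_exp.mpr h1
      have h3 : Real.exp (-((b : ℝ) ^ i * t)) = Real.exp (-t) ^ (b ^ i) := by
        rw [← Real.exp_nat_mul]
        congr 1
        push_cast
        ring
      have h4 : Real.exp (-t) ^ (b ^ i) ≤ Real.exp (-t) ^ i := by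
        apply pow_le_pow_of_le_one hr0 hr1.le
        calc i ≤ 2 ^ i := Nat.le_of_lt (Nat.lt_two_pow_self (n := i))
          _ ≤ b ^ i := Nat.pow_le_pow_left hb i
      linarith
    calc f i - 1 = ∑ d ∈ B.erase 0, Real.exp ((d : ℝ) * -((b : ℝ) ^ i * t)) := by
          rw [hsplit]; simp
      _ ≤ ∑ _d ∈ B.erase 0, Real.exp (-t) ^ i := Finset.sum_le_sum hterm
      _ = ((B.erase 0).card : ℝ) * Real.exp (-t) ^ i := by rw [Finset.sum_const, nsmul_eq_mul]
      _ ≤ (B.card : ℝ) * Real.exp (-t) ^ i := by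
          apply mul_le_mul_of_nonneg_right _ (pow_nonneg hr0 i)
          exact_mod_cast Finset.card_le_card (Finset.erase_subset _ _)
  have hsumlog : Summable (fun i => Real.log (f i)) := by
    apply Summable.of_nonneg_of_le
    · intro i; exact Real.log_nonneg (hone i)
    · intro i
      calc Real.log (f i) ≤ f i - 1 := Real.log_le_sub_one_of_pos (hpos i)
        _ ≤ (B.card : ℝ) * Real.exp (-t) ^ i := hbound i
    · exact (summable_geometric_of_lt_one hr0 hr1).mul_left _
  have hprod : HasProd f (Real.exp (∑' i, Real.log (f i))) := by
    have := hsumlog.hasSum.rexp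
    have heq : (Real.exp ∘ fun i => Real.log (f i)) = f := by
      funext i; simp [Function.comp, Real.exp_log (hpos i)]
    rwa [heq] at this
  have hmult : Multipliable f := ⟨_, hprod⟩
  refine ⟨hmult, ?_⟩
  -- the indicator sum
  set F : ℕ → ℝ := fun n => if BAdm b B n then Real.exp (-(n : ℝ) * t) else 0 with hFdef
  have hFnn : ∀ n, 0 ≤ F n := by
    intro n
    simp only [hFdef]
    split <;> [exact (Real.exp_pos _).le; exact le_rfl]
  have hFle : ∀ n, F n ≤ Real.exp (-t) ^ n := by
    intro n
    have hle : Real.exp (-(n : ℝ) * t) ≤ Real.exp (-t) ^ n := by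
      rw [← Real.exp_nat_mul]
      apply Real.exp_le_exp.mpr
      ring_nf
      exact le_rfl
    simp only [hFdef]
    split
    · exact hle
    · exact pow_nonneg hr0 n
  have hFsum : Summable F :=
    Summable.of_nonneg_of_le hFnn hFle (summable_geometric_of_lt_one hr0 hr1)
  -- partial products tend to both tprod and tsum F
  have ht1 : Filter.Tendsto (fun N => ∏ i ∈ range N, f i) Filter.atTop (nhds (∏' i, f i)) :=
    hmult.hasProd.tendsto_prod_nat
  have hkey : (fun N => ∏ i ∈ range N, f i) = fun N => ∑ n ∈ range (b ^ N), F n := by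
    funext N
    rw [hf, hFdef]
    convert key_prod_eq_sum b hb B hB h0 N t using 2
  have ht2 : Filter.Tendsto (fun N : ℕ => ∑ n ∈ range (b ^ N), F n) Filter.atTop
      (nhds (∑' n, F n)) := by
    exact (hFsum.hasSum.tendsto_sum_nat).comp
      (tendsto_pow_atTop_atTop_of_one_lt (by omega))
  have heq1 : ∏' i, f i = ∑' n, F n := by
    rw [hkey] at ht1
    exact tendsto_nhds_unique ht1 ht2
  have hsub : ∑' n : {n : ℕ // BAdm b B n}, Real.exp (-((n : ℕ) : ℝ) * t)
      = ∑' n : ℕ, Set.indicator {m : ℕ | BAdm b B m} (fun m : ℕ => Real.exp (-(m : ℝ) * t)) n :=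
by
    exact _root_.tsum_subtype {m : ℕ | BAdm b B m} (fun m : ℕ => Real.exp (-(m : ℝ) * t))
  rw [heq1, hsub]
  exact tsum_congr fun n => by simp [hFdef, Set.indicator_apply]
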